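/- Let ℓ ≥ 3 and let D be an oriented graph with no induced TT3 and no induced out-star S_{0,ℓ}. Then χ(D) ≤ 2ℓ - 2. -/

import Mathlib

/-- The underlying simple graph of a digraph given by its arc relation. -/
def underlying {V : Type*} (A : V → V → Prop) : SimpleGraph V where
  Adj x y := x ≠ y ∧ (A x y ∨ A y x)
  symm := by constructor; intro x y h; exact ⟨h.1.symm, h.2.symm⟩
  loopless := by constructor; intro x h; exact h.1 rfl

namespace Stmt5Aux

set_option linter.unusedVariables false

variable {V : Type*}

def reach (G : SimpleGraph V) (P : Set V) : V → V → Prop :=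
  Relation.ReflTransGen (fun u v => u ∈ P ∧ v ∈ P ∧ G.Adj u v)

variable {G : SimpleGraph V}

lemma reach_refl (P : Set V) (u : V) : reach G P u u := Relation.ReflTransGen.refl

lemma reach_trans {P : Set V} {u v w : V}
    (h1 : reach G P u v) (h2 : reach G P v w) : reach G P u w := h1.trans h2

lemma reach_symm {P : Set V} {u v : V} (h : reach G P u v) : reach G P v u :=
  haveI : Std.Symm (fun u v : V => u ∈ P ∧ v ∈ P ∧ G.Adj u v) :=
    ⟨fun _ _ hab => ⟨hab.2.1, hab.1, hab.2.2.symm⟩⟩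
  (Relation.ReflTransGen.symmetric (r := fun u v : V => u ∈ P ∧ v ∈ P ∧ G.Adj u v)).symm _ _ h

lemma reach_single {P : Set V} {u v : V}
    (hu : u ∈ P) (hv : v ∈ P) (h : G.Adj u v) : reach G P u v :=
  Relation.ReflTransGen.single ⟨hu, hv, h⟩

lemma reach_mono {P Q : Set V} (hPQ : P ⊆ Q) {u v : V}
    (h : reach G P u v) : reach G Q u v := by
  induction h with
  | refl => exact Relation.ReflTransGen.refl
  | tail _ hstep ih => exact ih.tail ⟨hPQ hstep.1, hPQ hstep.2.1, hstep.2.2⟩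

lemma reach_closed {P Q : Set V}
    (hQ : ∀ a ∈ Q, ∀ b ∈ P, G.Adj a b → b ∈ Q) {u v : V}
    (hu : u ∈ Q) (h : reach G P u v) : v ∈ Q := by
  induction h with
  | refl => exact hu
  | tail _ hstep ih => exact hQ _ ih _ hstep.2.1 hstep.2.2

lemma reach_mem {P : Set V} {u v : V}
    (hu : u ∈ P) (h : reach G P u v) : v ∈ P :=
  reach_closed (fun _ _ b hb _ => hb) hu h

def reachN (G : SimpleGraph V) (P : Set V) : ℕ → V → V → Prop
  | 0, u, v => u = v
  | (n+1), u, v => ∃ w, reachN G P n u w ∧ (w ∈ P ∧ v ∈ P ∧ G.Adj w v)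

lemma reach_iff_reachN {P : Set V} {u v : V} :
    reach G P u v ↔ ∃ n, reachN G P n u v := by
  constructor
  · intro h
    induction h with
    | refl => exact ⟨0, rfl⟩
    | tail _ hstep ih => obtain ⟨n, hn⟩ := ih; exact ⟨n+1, _, hn, hstep⟩
  · rintro ⟨n, hn⟩
    induction n generalizing v with
    | zero => cases hn; exact Relation.ReflTransGen.refl
    | succ n ih => obtain ⟨w, hw, hstep⟩ := hn; exact (ih hw).tail hstep

noncomputable def rd (G : SimpleGraph V) (P : Set V) (r v : V) : ℕ :=
  sInf {n | reachN G P n r v}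

lemma rd_spec {P : Set V} {r v : V} (h : reach G P r v) :
    reachN G P (rd G P r v) r v :=
  Nat.sInf_mem (reach_iff_reachN.mp h)

lemma rd_le {P : Set V} {r v : V} {n : ℕ} (h : reachN G P n r v) :
    rd G P r v ≤ n := Nat.sInf_le h

lemma exists_closer {P : Set V} {r v : V}
    (hne : v ≠ r) (h : reach G P r v) :
    ∃ w, w ∈ P ∧ G.Adj w v ∧ reach G P r w ∧ rd G P r w < rd G P r v := by
  have hs := rd_spec h
  cases hn : rd G P r v with
  | zero => rw [hn] at hs; exact absurd hs.symm hne
  | succ m =>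
    rw [hn] at hs
    obtain ⟨w, hw, hwP, hvP, hadj⟩ := hs
    refine ⟨w, hwP, hadj, reach_iff_reachN.mpr ⟨m, hw⟩, ?_⟩
    have := rd_le hw
    omega

/-- Any finite set can be listed in order of decreasing `f`. -/
lemma exists_sorted [DecidableEq V] (f : V → ℕ) (T : Finset V) :
    ∃ l : List V, l.Nodup ∧ l.toFinset = T ∧ l.Pairwise fun a b => f b ≤ f a := by
  generalize hn : T.card = n
  induction n generalizing T with
  | zero =>
    rw [Finset.card_eq_zero] at hn
    exact ⟨[], by simp [hn]⟩
  | succ n ih =>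
    have hne : T.Nonempty := by rw [← Finset.card_pos, hn]; omega
    obtain ⟨v, hv, hmax⟩ := T.exists_max_image f hne
    obtain ⟨l, hnd, htf, hp⟩ := ih (T.erase v) (by rw [Finset.card_erase_of_mem hv, hn]; rfl)
    refine ⟨v :: l, ?_, ?_, ?_⟩
    · refine List.nodup_cons.mpr ⟨?_, hnd⟩
      intro hvl
      have : v ∈ T.erase v := htf ▸ List.mem_toFinset.mpr hvl
      simp at this
    · rw [List.toFinset_cons, htf, Finset.insert_erase hv]
    · refine List.pairwise_cons.mpr ⟨?_, hp⟩
      intro b hb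
      have : b ∈ T.erase v := htf ▸ List.mem_toFinset.mpr hb
      exact hmax b (Finset.mem_of_mem_erase this)

/-- Greedy colouring along a list. -/
lemma greedy [DecidableEq V] (G : SimpleGraph V) [DecidableRel G.Adj] (N : ℕ) (hN : 0 < N) :
    ∀ (l : List V) (T : Finset V) (c : V → Fin N),
    (∀ u ∈ T, ∀ w ∈ T, G.Adj u w → c u ≠ c w) →
    l.Nodup → (∀ v ∈ l, v ∉ T) →
    (∀ (l₁ l₂ : List V) (v : V), l = l₁ ++ v :: l₂ →
       ((T ∪ l₁.toFinset).filter (G.Adj v)).card ≤ N - 1) →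
    ∃ c' : V → Fin N, (∀ x, x ∉ l → c' x = c x) ∧
      (∀ u ∈ T ∪ l.toFinset, ∀ w ∈ T ∪ l.toFinset, G.Adj u w → c' u ≠ c' w) := by
  intro l
  induction l with
  | nil =>
    intro T c hc _ _ _
    exact ⟨c, fun x _ => rfl, by simpa using hc⟩
  | cons v t ih =>
    intro T c hc hnd hdisj hbd
    -- pick a colour for v
    have hbd0 : ((T ∪ (List.toFinset ([] : List V))).filter (G.Adj v)).card ≤ N - 1 :=
      hbd [] t v rfl
    simp only [List.toFinset_nil, Finset.union_empty] at hbd0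
    have himg : ((T.filter (G.Adj v)).image c).card < N := by
      calc ((T.filter (G.Adj v)).image c).card ≤ (T.filter (G.Adj v)).card :=
            Finset.card_image_le
      _ ≤ N - 1 := hbd0
      _ < N := by omega
    have hex : ∃ col : Fin N, col ∉ (T.filter (G.Adj v)).image c := by
      by_contra hno
      push_neg at hno
      have : (Finset.univ : Finset (Fin N)) ⊆ (T.filter (G.Adj v)).image c :=
        fun col _ => hno col
      have := Finset.card_le_card this
      simp [Fintype.card_fin] at this
      omega
    obtain ⟨col, hcol⟩ := hex
    set c₁ := Function.update c v col with hc₁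
    have hvT : v ∉ T := hdisj v (by simp)
    have hc₁T : ∀ u ∈ insert v T, ∀ w ∈ insert v T, G.Adj u w → c₁ u ≠ c₁ w := by
      intro u hu w hw hadj
      rcases Finset.mem_insert.mp hu with hu | hu <;>
        rcases Finset.mem_insert.mp hw with hw | hw
      · rw [hu, hw] at hadj; exact absurd hadj (G.loopless.irrefl v)
      · have hwv : w ≠ v := fun h => hvT (h ▸ hw)
        rw [hu] at hadj ⊢
        rw [hc₁, Function.update_self, Function.update_of_ne hwv]
        intro h
        exact hcol (Finset.mem_image.mpr ⟨w, Finset.mem_filter.mpr ⟨hw, hadj⟩, h.symm⟩)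
      · have huv : u ≠ v := fun h => hvT (h ▸ hu)
        rw [hw] at hadj ⊢
        rw [hc₁, Function.update_of_ne huv, Function.update_self]
        intro h
        exact hcol (Finset.mem_image.mpr ⟨u, Finset.mem_filter.mpr ⟨hu, hadj.symm⟩, h⟩)
      · have huv : u ≠ v := fun h => hvT (h ▸ hu)
        have hwv : w ≠ v := fun h => hvT (h ▸ hw)
        rw [hc₁, Function.update_of_ne huv, Function.update_of_ne hwv]
        exact hc u hu w hw hadj
    have hnd' : t.Nodup := (List.nodup_cons.mp hnd).2
    have hvt : v ∉ t := (List.nodup_cons.mp hnd).1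
    have hdisj' : ∀ u ∈ t, u ∉ insert v T := by
      intro u hu
      simp only [Finset.mem_insert, not_or]
      exact ⟨fun h => hvt (h ▸ hu), hdisj u (by simp [hu])⟩
    have hbd' : ∀ (l₁ l₂ : List V) (u : V), t = l₁ ++ u :: l₂ →
        (((insert v T) ∪ l₁.toFinset).filter (G.Adj u)).card ≤ N - 1 := by
      intro l₁ l₂ u hsplit
      have := hbd (v :: l₁) l₂ u (by rw [hsplit]; rfl)
      have heq : T ∪ (v :: l₁).toFinset = (insert v T) ∪ l₁.toFinset := by
        simp [List.toFinset_cons, Finset.union_comm, Finset.union_assoc,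
          Finset.insert_union, Finset.union_insert]
      rwa [heq] at this
    obtain ⟨c', hagree, hproper⟩ := ih (insert v T) c₁ hc₁T hnd' hdisj' hbd'
    refine ⟨c', ?_, ?_⟩
    · intro x hx
      have hxt : x ∉ t := fun h => hx (by simp [h])
      have hxv : x ≠ v := fun h => hx (by simp [h])
      rw [hagree x hxt, hc₁, Function.update_of_ne hxv]
    · intro u hu w hw hadj
      have : T ∪ (v :: t).toFinset = (insert v T) ∪ t.toFinset := by
        simp [List.toFinset_cons, Finset.union_insert, Finset.insert_union]
      rw [this] at hu hw
      exact hproper u hu w hw hadj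

lemma bound_of_witness [DecidableEq V] {G : SimpleGraph V} [DecidableRel G.Adj] {N : ℕ}
    {S E : Finset V} {v w : V} (hE : E ⊆ S) (hadj : G.Adj v w) (hwS : w ∈ S) (hwE : w ∉ E)
    (hdeg : (S.filter (G.Adj v)).card ≤ N) :
    (E.filter (G.Adj v)).card ≤ N - 1 := by
  have hsub : E.filter (G.Adj v) ⊆ (S.filter (G.Adj v)).erase w := by
    intro u hu
    obtain ⟨huE, hadju⟩ := Finset.mem_filter.mp hu
    exact Finset.mem_erase.mpr ⟨fun h => hwE (h ▸ huE), Finset.mem_filter.mpr ⟨hE huE, hadju⟩⟩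
  have hw' : w ∈ S.filter (G.Adj v) := Finset.mem_filter.mpr ⟨hwS, hadj⟩
  calc (E.filter (G.Adj v)).card ≤ ((S.filter (G.Adj v)).erase w).card := Finset.card_le_card hsub
  _ = (S.filter (G.Adj v)).card - 1 := Finset.card_erase_of_mem hw'
  _ ≤ N - 1 := Nat.sub_le_sub_right hdeg 1

/-- The key structural lemma: in a graph with minimum degree 3 where some vertex has two
nonadjacent neighbours, if there is no cut vertex then there is a vertex `x` with two
nonadjacent neighbours `a, b` whose joint removal leaves the graph connected. -/
lemma exists_triple [DecidableEq V] [DecidableRel G.Adj] (S : Finset V)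
    (hdeg3 : ∀ v ∈ S, 3 ≤ (S.filter (G.Adj v)).card)
    (hpair : ∃ v₀ a₀ b₀ : V, v₀ ∈ S ∧ a₀ ∈ S ∧ b₀ ∈ S ∧ a₀ ≠ b₀ ∧
      G.Adj v₀ a₀ ∧ G.Adj v₀ b₀ ∧ ¬ G.Adj a₀ b₀)
    (hnocut : ∀ p ∈ S, ∀ z ∈ S.erase p, ∀ w ∈ S.erase p, reach G ↑(S.erase p) z w) :
    ∃ x a b : V, x ∈ S ∧ a ∈ S ∧ b ∈ S ∧ a ≠ b ∧ x ≠ a ∧ x ≠ b ∧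
      G.Adj x a ∧ G.Adj x b ∧ ¬ G.Adj a b ∧
      ∀ u ∈ (S.erase a).erase b, reach G ↑((S.erase a).erase b) u x := by
  obtain ⟨v₀, a₀, b₀, hv₀S, ha₀S, hb₀S, hab₀, hadja₀, hadjb₀, hnadj₀⟩ := hpair
  by_cases htry : ∀ u ∈ (S.erase a₀).erase b₀,
      reach G ↑((S.erase a₀).erase b₀) u v₀
  · exact ⟨v₀, a₀, b₀, hv₀S, ha₀S, hb₀S, hab₀, hadja₀.ne, hadjb₀.ne,
      hadja₀, hadjb₀, hnadj₀, htry⟩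
  push_neg at htry
  obtain ⟨u₀, hu₀, hnr₀⟩ := htry
  classical
  have hv₀mem : v₀ ∈ (S.erase a₀).erase b₀ :=
    Finset.mem_erase.mpr ⟨hadjb₀.ne, Finset.mem_erase.mpr ⟨hadja₀.ne, hv₀S⟩⟩
  -- set of "bad configurations"
  have hbad : ∃ n : ℕ, ∃ x y z w : V, x ∈ S ∧ y ∈ S ∧ x ≠ y ∧
      z ∈ (S.erase x).erase y ∧ w ∈ (S.erase x).erase y ∧
      ¬ reach G ↑((S.erase x).erase y) z w ∧
      (((S.erase x).erase y).filter
        (fun q => reach G ↑((S.erase x).erase y) z q)).card = n :=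
    ⟨_, a₀, b₀, u₀, v₀, ha₀S, hb₀S, hab₀, hu₀, hv₀mem, hnr₀, rfl⟩
  obtain ⟨x, y, z, w, hxS, hyS, hxy, hzP, hwP, hnzw, hcard⟩ := Nat.find_spec hbad
  set m := Nat.find hbad with hm
  set P : Finset V := (S.erase x).erase y with hPdef
  have hPmem : ∀ {u : V}, u ∈ P ↔ u ∈ S ∧ u ≠ x ∧ u ≠ y := by
    intro u
    simp only [hPdef, Finset.mem_erase]
    tauto
  set D₁ : Finset V := P.filter (fun q => reach G ↑P z q) with hD₁def
  set D₂ : Finset V := P.filter (fun q => reach G ↑P w q) with hD₂def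
  have hzD : z ∈ D₁ := Finset.mem_filter.mpr ⟨hzP, reach_refl _ _⟩
  have hwD : w ∈ D₂ := Finset.mem_filter.mpr ⟨hwP, reach_refl _ _⟩
  have hD₁closed : ∀ q ∈ D₁, ∀ u ∈ P, G.Adj q u → u ∈ D₁ := by
    intro q hq u hu hadj
    obtain ⟨hqP, hqr⟩ := Finset.mem_filter.mp hq
    exact Finset.mem_filter.mpr ⟨hu, hqr.trans (reach_single hqP hu hadj)⟩
  have hD₂closed : ∀ q ∈ D₂, ∀ u ∈ P, G.Adj q u → u ∈ D₂ := by
    intro q hq u hu hadj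
    obtain ⟨hqP, hqr⟩ := Finset.mem_filter.mp hq
    exact Finset.mem_filter.mpr ⟨hu, hqr.trans (reach_single hqP hu hadj)⟩
  have hD₁D₂ : ∀ q, q ∈ D₁ → q ∈ D₂ → False := by
    intro q hq1 hq2
    exact hnzw ((Finset.mem_filter.mp hq1).2.trans
      (reach_symm (Finset.mem_filter.mp hq2).2))
  -- x has a neighbour in D₁ and in D₂
  have hxnbr : ∀ (D : Finset V) (z' : V), z' ∈ D →
      (∀ q ∈ D, ∀ u ∈ P, G.Adj q u → u ∈ D) → D ⊆ P →
      ∃ a', a' ∈ D ∧ G.Adj x a' := by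
    intro D z' hz'D hclosed hDP
    by_contra hno
    push_neg at hno
    have hz'P := hDP hz'D
    have hclosed' : ∀ q ∈ (↑D : Set V), ∀ u ∈ (↑(S.erase y) : Set V),
        G.Adj q u → u ∈ (↑D : Set V) := by
      intro q hq u hu hadj
      simp only [Finset.mem_coe] at hq ⊢
      rw [Finset.coe_erase] at hu
      obtain ⟨huS, huy⟩ := hu
      by_cases hux : u = x
      · exact absurd (hux ▸ hadj.symm) (fun h => hno q hq h)
      · exact hclosed q hq u (hPmem.mpr ⟨huS, hux, Ne.intro huy⟩) hadj
    have hreach := hnocut y hyS z'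
      (Finset.mem_erase.mpr ⟨(hPmem.mp hz'P).2.2, (hPmem.mp hz'P).1⟩) x
      (Finset.mem_erase.mpr ⟨hxy, hxS⟩)
    have hxD : x ∈ (↑D : Set V) := reach_closed hclosed' (by exact hz'D) hreach
    simp only [Finset.mem_coe] at hxD
    exact (hPmem.mp (hDP hxD)).2.1 rfl
  obtain ⟨a', haD1, hxa'⟩ := hxnbr D₁ z hzD hD₁closed (Finset.filter_subset _ _)
  obtain ⟨b', hbD2, hxb'⟩ := hxnbr D₂ w hwD hD₂closed (Finset.filter_subset _ _)
  have ha'P : a' ∈ P := (Finset.mem_filter.mp haD1).1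
  have hb'P : b' ∈ P := (Finset.mem_filter.mp hbD2).1
  have ha'S : a' ∈ S := (hPmem.mp ha'P).1
  have hb'S : b' ∈ S := (hPmem.mp hb'P).1
  have ha'b'ne : a' ≠ b' := fun h => hD₁D₂ a' haD1 (h ▸ hbD2)
  have ha'b' : ¬ G.Adj a' b' := fun h => hD₁D₂ b' (hD₁closed a' haD1 b' hb'P h) hbD2
  -- the set K = (D₁ \ {a'}) ∪ {x, y}
  set KF : Finset V := insert x (insert y (D₁.erase a')) with hKdef
  have hKmem : ∀ {u : V}, u ∈ KF ↔ u = x ∨ u = y ∨ (u ∈ D₁ ∧ u ≠ a') := by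
    intro u
    simp only [hKdef, Finset.mem_insert, Finset.mem_erase]
    tauto
  set U : Finset V := KF.filter (fun u => reach G ↑KF u x) with hUdef
  have hxU : x ∈ U := Finset.mem_filter.mpr ⟨hKmem.mpr (Or.inl rfl), reach_refl _ _⟩
  have hUclosed : ∀ q ∈ KF, ∀ u ∈ U, G.Adj q u → q ∈ U := by
    intro q hq u hu hadj
    obtain ⟨huK, hur⟩ := Finset.mem_filter.mp hu
    exact Finset.mem_filter.mpr ⟨hq, (reach_single hq huK hadj).trans hur⟩
  have hKnbr : ∀ q ∈ D₁, q ≠ a' → ∀ u ∈ S, G.Adj q u → u = a' ∨ u ∈ KF := by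
    intro q hqD hqa u huS hadj
    by_cases hux : u = x
    · exact Or.inr (hKmem.mpr (Or.inl hux))
    by_cases huy : u = y
    · exact Or.inr (hKmem.mpr (Or.inr (Or.inl huy)))
    have huP : u ∈ P := hPmem.mpr ⟨huS, hux, huy⟩
    have huD : u ∈ D₁ := hD₁closed q hqD u huP hadj
    by_cases hua : u = a'
    · exact Or.inl hua
    · exact Or.inr (hKmem.mpr (Or.inr (Or.inr ⟨huD, hua⟩)))
  have hmpos : 1 ≤ m := by
    rw [← hcard]
    exact Finset.card_pos.mpr ⟨z, hzD⟩
  -- main claim: everything in KF reaches x within KF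
  have hyU : y ∈ U := by
    by_contra hyU
    -- sub1 : U ⊆ {x}
    have hU1 : ∀ q ∈ U, q = x := by
      intro q hqU
      by_contra hqx
      have hqK : q ∈ KF := (Finset.mem_filter.mp hqU).1
      have hqy : q ≠ y := fun h => hyU (h ▸ hqU)
      have hqD : q ∈ D₁ ∧ q ≠ a' := by
        rcases hKmem.mp hqK with h | h | h
        · exact absurd h hqx
        · exact absurd h hqy
        · exact h
      -- Qs := U \ {x} is closed in S \ {x, a'}
      set Qs : Set V := {u | u ∈ U ∧ u ≠ x} with hQsdef
      have hQsclosed : ∀ p ∈ Qs, ∀ u ∈ (↑((S.erase x).erase a') : Set V),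
          G.Adj p u → u ∈ Qs := by
        intro p hp u hu hadj
        obtain ⟨hpU, hpx⟩ := hp
        have hpK : p ∈ KF := (Finset.mem_filter.mp hpU).1
        have hpy : p ≠ y := fun h => hyU (h ▸ hpU)
        have hpD : p ∈ D₁ ∧ p ≠ a' := by
          rcases hKmem.mp hpK with h | h | h
          · exact absurd h hpx
          · exact absurd h hpy
          · exact h
        have hu2 := Finset.mem_coe.mp hu
        obtain ⟨hua', hu3⟩ := Finset.mem_erase.mp hu2
        obtain ⟨hux, huS⟩ := Finset.mem_erase.mp hu3
        rcases hKnbr p hpD.1 hpD.2 u huS hadj with h | h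
        · exact absurd h hua'
        · exact ⟨hUclosed u h p hpU hadj.symm, hux⟩
      -- this gives a smaller bad configuration (x, a', q) with witness y
      have hqmem : q ∈ (S.erase x).erase a' := by
        refine Finset.mem_erase.mpr ⟨hqD.2, Finset.mem_erase.mpr ⟨hqx, ?_⟩⟩
        exact (hPmem.mp (Finset.filter_subset _ _ hqD.1)).1
      have hymem : y ∈ (S.erase x).erase a' := by
        refine Finset.mem_erase.mpr ⟨?_, Finset.mem_erase.mpr ⟨hxy.symm, hyS⟩⟩
        exact fun h => (hPmem.mp ha'P).2.2 h.symm
      have hqQs : q ∈ Qs := ⟨hqU, hqx⟩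
      have hnqy : ¬ reach G ↑((S.erase x).erase a') q y := by
        intro hr
        have : y ∈ Qs := reach_closed hQsclosed hqQs hr
        exact hyU this.1
      have hsmall : (((S.erase x).erase a').filter
          (fun q' => reach G ↑((S.erase x).erase a') q q')).card < m := by
        have hsub : ((S.erase x).erase a').filter
            (fun q' => reach G ↑((S.erase x).erase a') q q') ⊆ D₁.erase a' := by
          intro r hr
          obtain ⟨hrmem, hrr⟩ := Finset.mem_filter.mp hr
          have hrQs : r ∈ Qs := reach_closed hQsclosed hqQs hrr
          have hrK : r ∈ KF := (Finset.mem_filter.mp hrQs.1).1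
          have hry : r ≠ y := fun h => hyU (h ▸ hrQs.1)
          rcases hKmem.mp hrK with h | h | h
          · exact absurd h hrQs.2
          · exact absurd h hry
          · exact Finset.mem_erase.mpr ⟨h.2, h.1⟩
        calc (((S.erase x).erase a').filter
            (fun q' => reach G ↑((S.erase x).erase a') q q')).card
            ≤ (D₁.erase a').card := Finset.card_le_card hsub
        _ = D₁.card - 1 := Finset.card_erase_of_mem haD1
        _ < m := by rw [← hcard]; have : 1 ≤ D₁.card := Finset.card_pos.mpr ⟨z, hzD⟩; omega
      exact Nat.find_min hbad hsmall
        ⟨x, a', q, y, hxS, ha'S, (fun h => (hPmem.mp ha'P).2.1 h.symm), hqmem, hymem, hnqy, rfl⟩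
    -- sub2 : KF \ U ⊆ {y}
    have hU2 : ∀ q ∈ KF, q ∉ U → q = y := by
      intro q hqK hqU
      by_contra hqy
      have hqx : q ≠ x := fun h => hqU (h ▸ hxU)
      have hqD : q ∈ D₁ ∧ q ≠ a' := by
        rcases hKmem.mp hqK with h | h | h
        · exact absurd h hqx
        · exact absurd h hqy
        · exact h
      set Qs : Set V := {u | u ∈ KF ∧ u ∉ U ∧ u ≠ y} with hQsdef
      have hQsclosed : ∀ p ∈ Qs, ∀ u ∈ (↑((S.erase y).erase a') : Set V),
          G.Adj p u → u ∈ Qs := by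
        intro p hp u hu hadj
        obtain ⟨hpK, hpU, hpy⟩ := hp
        have hpx : p ≠ x := fun h => hpU (h ▸ hxU)
        have hpD : p ∈ D₁ ∧ p ≠ a' := by
          rcases hKmem.mp hpK with h | h | h
          · exact absurd h hpx
          · exact absurd h hpy
          · exact h
        have hu2 := Finset.mem_coe.mp hu
        obtain ⟨hua', hu3⟩ := Finset.mem_erase.mp hu2
        obtain ⟨huy, huS⟩ := Finset.mem_erase.mp hu3
        rcases hKnbr p hpD.1 hpD.2 u huS hadj with h | h
        · exact absurd h hua'
        · refine ⟨h, ?_, huy⟩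
          intro huU
          exact hpU (hUclosed p hpK u huU hadj)
      have hqmem : q ∈ (S.erase y).erase a' := by
        refine Finset.mem_erase.mpr ⟨hqD.2, Finset.mem_erase.mpr ⟨hqy, ?_⟩⟩
        exact (hPmem.mp (Finset.filter_subset _ _ hqD.1)).1
      have hxmem : x ∈ (S.erase y).erase a' := by
        refine Finset.mem_erase.mpr ⟨?_, Finset.mem_erase.mpr ⟨hxy, hxS⟩⟩
        exact fun h => (hPmem.mp ha'P).2.1 h.symm
      have hqQs : q ∈ Qs := ⟨hqK, hqU, hqy⟩
      have hnqx : ¬ reach G ↑((S.erase y).erase a') q x := by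
        intro hr
        have : x ∈ Qs := reach_closed hQsclosed hqQs hr
        exact this.2.1 hxU
      have hsmall : (((S.erase y).erase a').filter
          (fun q' => reach G ↑((S.erase y).erase a') q q')).card < m := by
        have hsub : ((S.erase y).erase a').filter
            (fun q' => reach G ↑((S.erase y).erase a') q q') ⊆ D₁.erase a' := by
          intro r hr
          obtain ⟨hrmem, hrr⟩ := Finset.mem_filter.mp hr
          have hrQs : r ∈ Qs := reach_closed hQsclosed hqQs hrr
          have hrx : r ≠ x := fun h => hrQs.2.1 (h ▸ hxU)
          rcases hKmem.mp hrQs.1 with h | h | h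
          · exact absurd h hrx
          · exact absurd h hrQs.2.2
          · exact Finset.mem_erase.mpr ⟨h.2, h.1⟩
        calc (((S.erase y).erase a').filter
            (fun q' => reach G ↑((S.erase y).erase a') q q')).card
            ≤ (D₁.erase a').card := Finset.card_le_card hsub
        _ = D₁.card - 1 := Finset.card_erase_of_mem haD1
        _ < m := by rw [← hcard]; have : 1 ≤ D₁.card := Finset.card_pos.mpr ⟨z, hzD⟩; omega
      exact Nat.find_min hbad hsmall
        ⟨y, a', q, x, hyS, ha'S, (fun h => (hPmem.mp ha'P).2.2 h.symm), hqmem, hxmem, hnqx, rfl⟩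
    -- now D₁ = {a'} and a' has degree ≤ 2, contradiction
    have hD1sub : D₁ ⊆ {a'} := by
      intro d hd
      by_contra hda
      have hdK : d ∈ KF := hKmem.mpr (Or.inr (Or.inr ⟨hd, fun h => hda (by simp [h])⟩))
      have hdP := Finset.filter_subset _ _ hd
      by_cases hdU : d ∈ U
      · exact (hPmem.mp hdP).2.1 (hU1 d hdU)
      · exact (hPmem.mp hdP).2.2 (hU2 d hdK hdU)
    have hdegsub : S.filter (G.Adj a') ⊆ {x, y} := by
      intro u hu
      obtain ⟨huS, hadj⟩ := Finset.mem_filter.mp hu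
      by_cases hux : u = x
      · simp [hux]
      by_cases huy : u = y
      · simp [huy]
      have huP : u ∈ P := hPmem.mpr ⟨huS, hux, huy⟩
      have huD : u ∈ D₁ := hD₁closed a' haD1 u huP hadj
      have := hD1sub huD
      simp only [Finset.mem_singleton] at this
      exact absurd (this ▸ hadj) (G.loopless.irrefl a')
    have := hdeg3 a' ha'S
    have hc2 : (S.filter (G.Adj a')).card ≤ 2 :=
      le_trans (Finset.card_le_card hdegsub) (Finset.card_insert_le _ _ |>.trans (by simp))
    omega
  -- with y ∈ U we get: all of KF reaches x within KF
  have hA : ∀ u ∈ KF, reach G ↑KF u x := by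
    intro u huK
    by_contra hnu
    have huU : u ∉ U := fun h => hnu (Finset.mem_filter.mp h).2
    have hux : u ≠ x := fun h => huU (h ▸ hxU)
    have huy : u ≠ y := fun h => huU (h ▸ hyU)
    have huD : u ∈ D₁ ∧ u ≠ a' := by
      rcases hKmem.mp huK with h | h | h
      · exact absurd h hux
      · exact absurd h huy
      · exact h
    set Qs : Set V := {q | q ∈ KF ∧ q ∉ U} with hQsdef
    have hQsclosed : ∀ p ∈ Qs, ∀ u' ∈ (↑(S.erase a') : Set V),
        G.Adj p u' → u' ∈ Qs := by
      intro p hp u' hu' hadj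
      obtain ⟨hpK, hpU⟩ := hp
      have hpx : p ≠ x := fun h => hpU (h ▸ hxU)
      have hpy : p ≠ y := fun h => hpU (h ▸ hyU)
      have hpD : p ∈ D₁ ∧ p ≠ a' := by
        rcases hKmem.mp hpK with h | h | h
        · exact absurd h hpx
        · exact absurd h hpy
        · exact h
      obtain ⟨hua', huS⟩ := Finset.mem_erase.mp (Finset.mem_coe.mp hu')
      rcases hKnbr p hpD.1 hpD.2 u' huS hadj with h | h
      · exact absurd h hua'
      · refine ⟨h, fun huU' => hpU (hUclosed p hpK u' huU' hadj)⟩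
    have huQs : u ∈ Qs := ⟨huK, huU⟩
    have huSa : u ∈ S.erase a' := Finset.mem_erase.mpr
      ⟨huD.2, (hPmem.mp (Finset.filter_subset _ _ huD.1)).1⟩
    have hxSa : x ∈ S.erase a' := Finset.mem_erase.mpr
      ⟨fun h => (hPmem.mp ha'P).2.1 h.symm, hxS⟩
    have hreach := hnocut a' ha'S u huSa x hxSa
    have : x ∈ Qs := reach_closed hQsclosed huQs hreach
    exact this.2 hxU
  -- Claim B : everything in S \ {a', b'} reaches x there
  have hKsub : ∀ q ∈ KF, q ∈ (S.erase a').erase b' := by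
    intro q hq
    rcases hKmem.mp hq with h | h | h
    · subst h
      exact Finset.mem_erase.mpr ⟨hxb'.ne, Finset.mem_erase.mpr ⟨hxa'.ne, hxS⟩⟩
    · subst h
      refine Finset.mem_erase.mpr ⟨fun h => (hPmem.mp hb'P).2.2 h.symm,
        Finset.mem_erase.mpr ⟨fun h => (hPmem.mp ha'P).2.2 h.symm, hyS⟩⟩
    · refine Finset.mem_erase.mpr ⟨fun heq => hD₁D₂ q h.1 (heq ▸ hbD2),
        Finset.mem_erase.mpr ⟨h.2, (hPmem.mp (Finset.filter_subset _ _ h.1)).1⟩⟩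
  have hKreach : ∀ q ∈ KF, reach G ↑((S.erase a').erase b') q x := by
    intro q hq
    exact reach_mono (by intro r hr; simp only [Finset.mem_coe] at hr ⊢; exact hKsub r hr)
      (hA q hq)
  have hB : ∀ u ∈ (S.erase a').erase b', reach G ↑((S.erase a').erase b') u x := by
    intro u hu
    obtain ⟨hub', hua', huS⟩ : u ≠ b' ∧ u ≠ a' ∧ u ∈ S := by
      obtain ⟨h1, h2⟩ := Finset.mem_erase.mp hu
      obtain ⟨h3, h4⟩ := Finset.mem_erase.mp h2
      exact ⟨h1, h3, h4⟩
    by_cases hux : u = x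
    · exact hux ▸ reach_refl _ _
    by_cases huy : u = y
    · exact hKreach u (hKmem.mpr (Or.inr (Or.inl huy)))
    have huP : u ∈ P := hPmem.mpr ⟨huS, hux, huy⟩
    by_cases huD : u ∈ D₁
    · exact hKreach u (hKmem.mpr (Or.inr (Or.inr ⟨huD, hua'⟩)))
    -- u is in another component C of P
    set C : Finset V := P.filter (fun q => reach G ↑P u q) with hCdef
    have huC : u ∈ C := Finset.mem_filter.mpr ⟨huP, reach_refl _ _⟩
    have hCclosed : ∀ q ∈ C, ∀ r ∈ P, G.Adj q r → r ∈ C := by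
      intro q hq r hr hadj
      obtain ⟨hqP, hqr⟩ := Finset.mem_filter.mp hq
      exact Finset.mem_filter.mpr ⟨hr, hqr.trans (reach_single hqP hr hadj)⟩
    have ha'C : a' ∉ C := by
      intro h
      have hr1 : reach G ↑P u a' := (Finset.mem_filter.mp h).2
      have hr2 : reach G ↑P z a' := (Finset.mem_filter.mp haD1).2
      exact huD (Finset.mem_filter.mpr ⟨huP, hr2.trans (reach_symm hr1)⟩)
    have hCS'' : ∀ q ∈ C, q ≠ b' → q ∈ (S.erase a').erase b' := by
      intro q hq hqb
      have hqP := Finset.filter_subset _ _ hq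
      exact Finset.mem_erase.mpr ⟨hqb, Finset.mem_erase.mpr
        ⟨fun h => ha'C (h ▸ hq), (hPmem.mp hqP).1⟩⟩
    set Ws : Set V := {q | q ∈ C ∧ q ≠ b' ∧ ¬ reach G ↑((S.erase a').erase b') q x}
      with hWdef
    have hyreach : reach G ↑((S.erase a').erase b') y x :=
      hKreach y (hKmem.mpr (Or.inr (Or.inl rfl)))
    have hWclosed : ∀ p ∈ Ws, ∀ r ∈ (↑(S.erase b') : Set V), G.Adj p r → r ∈ Ws := by
      intro p hp r hr hadj
      obtain ⟨hpC, hpb, hpnr⟩ := hp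
      have hpS'' : p ∈ (S.erase a').erase b' := hCS'' p hpC hpb
      obtain ⟨hrb, hrS⟩ := Finset.mem_erase.mp (Finset.mem_coe.mp hr)
      by_cases hrx : r = x
      · exact absurd (reach_single (Finset.mem_coe.mpr hpS'')
          (Finset.mem_coe.mpr (hrx ▸ hKsub x (hKmem.mpr (Or.inl rfl)) : r ∈ _))
          hadj) (hrx ▸ hpnr)
      by_cases hry : r = y
      · refine absurd ((reach_single (Finset.mem_coe.mpr hpS'')
          (Finset.mem_coe.mpr (hry ▸ hKsub y (hKmem.mpr (Or.inr (Or.inl rfl))) : r ∈ _))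
          hadj).trans (hry ▸ hyreach)) hpnr
      have hrP : r ∈ P := hPmem.mpr ⟨hrS, hrx, hry⟩
      have hrC : r ∈ C := hCclosed p hpC r hrP hadj
      refine ⟨hrC, hrb, ?_⟩
      intro hrreach
      exact hpnr ((reach_single (Finset.mem_coe.mpr hpS'')
        (Finset.mem_coe.mpr (hCS'' r hrC hrb)) hadj).trans hrreach)
    by_contra hnur
    have huWs : u ∈ Ws := ⟨huC, hub', hnur⟩
    have huSb : u ∈ S.erase b' := Finset.mem_erase.mpr ⟨hub', huS⟩
    have hxSb : x ∈ S.erase b' := Finset.mem_erase.mpr ⟨hxb'.ne, hxS⟩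
    have hreach := hnocut b' hb'S u huSb x hxSb
    have : x ∈ Ws := reach_closed hWclosed huWs hreach
    exact this.2.2 (reach_refl _ _)
  exact ⟨x, a', b', hxS, ha'S, hb'S, ha'b'ne, hxa'.ne, hxb'.ne, hxa', hxb', ha'b', hB⟩

lemma exists_free_color {N : ℕ} (s : Finset (Fin N)) (h : s.card < N) :
    ∃ col : Fin N, col ∉ s := by
  by_contra hno
  push_neg at hno
  have : (Finset.univ : Finset (Fin N)) ⊆ s := fun col _ => hno col
  have := Finset.card_le_card this
  simp [Fintype.card_fin] at this
  omega

/-- Colour `S` with `N` colours given a Lovász triple. -/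
lemma lovasz_color [DecidableEq V] [DecidableRel G.Adj] (N : ℕ) (hN : 0 < N)
    (S : Finset V) (x a b : V)
    (hxS : x ∈ S) (haS : a ∈ S) (hbS : b ∈ S)
    (hab : a ≠ b) (hxa : x ≠ a) (hxb : x ≠ b)
    (hadja : G.Adj x a) (hadjb : G.Adj x b) (hnadj : ¬ G.Adj a b)
    (hdeg : ∀ v ∈ S, (S.filter (G.Adj v)).card ≤ N)
    (hconn : ∀ u ∈ (S.erase a).erase b, reach G ↑((S.erase a).erase b) u x) :
    ∃ c : V → Fin N, ∀ u ∈ S, ∀ w ∈ S, G.Adj u w → c u ≠ c w := by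
  set S'' : Finset V := (S.erase a).erase b with hSdef
  have hxS'' : x ∈ S'' := Finset.mem_erase.mpr ⟨hxb, Finset.mem_erase.mpr ⟨hxa, hxS⟩⟩
  obtain ⟨l, hnd, htf, hp⟩ := exists_sorted (rd G ↑S'' x) (S''.erase x)
  set T : Finset V := {a, b} with hTdef
  set c₀ : V → Fin N := fun _ => ⟨0, hN⟩ with hc₀def
  have hc₀proper : ∀ u ∈ T, ∀ w ∈ T, G.Adj u w → c₀ u ≠ c₀ w := by
    intro u hu w hw hadj
    simp only [hTdef, Finset.mem_insert, Finset.mem_singleton] at hu hw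
    rcases hu with rfl | rfl <;> rcases hw with rfl | rfl
    · exact absurd hadj (G.loopless.irrefl _)
    · exact absurd hadj hnadj
    · exact absurd hadj.symm hnadj
    · exact absurd hadj (G.loopless.irrefl _)
  have hmem_l : ∀ v ∈ l, v ∈ S''.erase x := by
    intro v hv; rw [← htf]; exact List.mem_toFinset.mpr hv
  have hdisj : ∀ v ∈ l, v ∉ T := by
    intro v hv hvT
    have := hmem_l v hv
    obtain ⟨hvx, hv''⟩ := Finset.mem_erase.mp this
    obtain ⟨hvb, hv2⟩ := Finset.mem_erase.mp hv''
    obtain ⟨hva, _⟩ := Finset.mem_erase.mp hv2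
    simp only [hTdef, Finset.mem_insert, Finset.mem_singleton] at hvT
    tauto
  have hbd : ∀ (l₁ l₂ : List V) (v : V), l = l₁ ++ v :: l₂ →
      ((T ∪ l₁.toFinset).filter (G.Adj v)).card ≤ N - 1 := by
    intro l₁ l₂ v hsplit
    have hvl : v ∈ l := by rw [hsplit]; simp
    have hv'' := hmem_l v hvl
    obtain ⟨hvx, hvS''⟩ := Finset.mem_erase.mp hv''
    have hreach : reach G ↑S'' x v := reach_symm (hconn v hvS'')
    obtain ⟨w, hwP, hadjwv, _, hrdlt⟩ := exists_closer hvx hreach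
    have hwS'' : w ∈ S'' := Finset.mem_coe.mp hwP
    have hwS : w ∈ S := Finset.mem_of_mem_erase (Finset.mem_of_mem_erase hwS'')
    have hE : T ∪ l₁.toFinset ⊆ S := by
      intro u hu
      rcases Finset.mem_union.mp hu with hu | hu
      · simp only [hTdef, Finset.mem_insert, Finset.mem_singleton] at hu
        rcases hu with rfl | rfl <;> assumption
      · have : u ∈ l := by rw [hsplit]; exact List.mem_append_left _ (List.mem_toFinset.mp hu)
        exact Finset.mem_of_mem_erase (Finset.mem_of_mem_erase
          (Finset.mem_of_mem_erase (hmem_l u this)))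
    have hwE : w ∉ T ∪ l₁.toFinset := by
      intro hw
      rcases Finset.mem_union.mp hw with hw | hw
      · simp only [hTdef, Finset.mem_insert, Finset.mem_singleton] at hw
        obtain ⟨hwb, hw2⟩ := Finset.mem_erase.mp hwS''
        obtain ⟨hwa, _⟩ := Finset.mem_erase.mp hw2
        tauto
      · -- w occurs before v in l, contradicting sortedness
        have hwl₁ : w ∈ l₁ := List.mem_toFinset.mp hw
        have := (List.pairwise_append.mp (hsplit ▸ hp)).2.2 w hwl₁ v (by simp)
        omega
    exact bound_of_witness hE hadjwv.symm hwS hwE (hdeg v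
      (Finset.mem_of_mem_erase (Finset.mem_of_mem_erase hvS'')))
  obtain ⟨c', hagree, hproper⟩ := greedy G N hN l T c₀ hc₀proper hnd hdisj hbd
  -- coloured set is S \ {x}
  have hcov : T ∪ l.toFinset = S.erase x := by
    rw [htf]
    ext u
    simp only [hTdef, Finset.mem_union, Finset.mem_insert, Finset.mem_singleton,
      Finset.mem_erase, hSdef]
    constructor
    · rintro ((rfl | rfl) | ⟨hux, hub, hua, huS⟩)
      · exact ⟨fun h => hxa h.symm, haS⟩
      · exact ⟨fun h => hxb h.symm, hbS⟩
      · exact ⟨hux, huS⟩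
    · rintro ⟨hux, huS⟩
      by_cases hua : u = a
      · exact Or.inl (Or.inl hua)
      by_cases hub : u = b
      · exact Or.inl (Or.inr hub)
      · exact Or.inr ⟨hux, hub, hua, huS⟩
  have hanl : a ∉ l := by
    intro h
    have := hmem_l a h
    obtain ⟨_, h2⟩ := Finset.mem_erase.mp this
    obtain ⟨_, h3⟩ := Finset.mem_erase.mp h2
    exact (Finset.mem_erase.mp h3).1 rfl
  have hbnl : b ∉ l := by
    intro h
    have := hmem_l b h
    obtain ⟨_, h2⟩ := Finset.mem_erase.mp this
    exact (Finset.mem_erase.mp h2).1 rfl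
  have hca : c' a = c₀ a := hagree a hanl
  have hcb : c' b = c₀ b := hagree b hbnl
  have hcab : c' a = c' b := by rw [hca, hcb]
  -- colour x
  set X : Finset V := (S.erase x).filter (G.Adj x) with hXdef
  have haX : a ∈ X := Finset.mem_filter.mpr
    ⟨Finset.mem_erase.mpr ⟨fun h => hxa h.symm, haS⟩, hadja⟩
  have hbX : b ∈ X := Finset.mem_filter.mpr
    ⟨Finset.mem_erase.mpr ⟨fun h => hxb h.symm, hbS⟩, hadjb⟩
  have himg : (X.image c').card < N := by
    have hsub : X.image c' ⊆ (X.erase b).image c' := by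
      intro col hcol
      obtain ⟨q, hq, rfl⟩ := Finset.mem_image.mp hcol
      by_cases hqb : q = b
      · exact Finset.mem_image.mpr ⟨a, Finset.mem_erase.mpr ⟨hab, haX⟩, by rw [hqb, ← hcab]⟩
      · exact Finset.mem_image.mpr ⟨q, Finset.mem_erase.mpr ⟨hqb, hq⟩, rfl⟩
    have hXcard : X.card ≤ N := by
      have : X ⊆ S.filter (G.Adj x) := by
        intro u hu
        obtain ⟨hu1, hu2⟩ := Finset.mem_filter.mp hu
        exact Finset.mem_filter.mpr ⟨Finset.mem_of_mem_erase hu1, hu2⟩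
      exact le_trans (Finset.card_le_card this) (hdeg x hxS)
    calc (X.image c').card ≤ ((X.erase b).image c').card := Finset.card_le_card hsub
    _ ≤ (X.erase b).card := Finset.card_image_le
    _ = X.card - 1 := Finset.card_erase_of_mem hbX
    _ < N := by
      have : 1 ≤ X.card := Finset.card_pos.mpr ⟨b, hbX⟩
      omega
  obtain ⟨col, hcol⟩ := exists_free_color _ himg
  refine ⟨Function.update c' x col, ?_⟩
  intro u hu w hw hadj
  by_cases hux : u = x <;> by_cases hwx : w = x
  · rw [hux, hwx] at hadj; exact absurd hadj (G.loopless.irrefl x)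
  · rw [hux] at hadj ⊢
    rw [Function.update_self, Function.update_of_ne hwx]
    intro h
    exact hcol (h ▸ Finset.mem_image.mpr ⟨w, Finset.mem_filter.mpr
      ⟨Finset.mem_erase.mpr ⟨hwx, hw⟩, hadj⟩, rfl⟩)
  · rw [hwx] at hadj ⊢
    rw [Function.update_self, Function.update_of_ne hux]
    intro h
    exact hcol (h ▸ Finset.mem_image.mpr ⟨u, Finset.mem_filter.mpr
      ⟨Finset.mem_erase.mpr ⟨hux, hu⟩, hadj.symm⟩, rfl⟩)
  · rw [Function.update_of_ne hux, Function.update_of_ne hwx]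
    have hu' : u ∈ T ∪ l.toFinset := hcov ▸ Finset.mem_erase.mpr ⟨hux, hu⟩
    have hw' : w ∈ T ∪ l.toFinset := hcov ▸ Finset.mem_erase.mpr ⟨hwx, hw⟩
    exact hproper u hu' w hw' hadj


end Stmt5Aux

open Stmt5Aux

theorem stmt5 {V : Type*} [Fintype V] (ℓ : ℕ) (hl : 3 ≤ ℓ)
    (A : V → V → Prop) (hasym : ∀ x y, A x y → ¬ A y x)
    (hTT3 : ¬ ∃ u v w : V, A u v ∧ A v w ∧ A u w)
    (hS0l : ¬ ∃ (x : V) (s : Finset V), s.card = ℓ ∧ (∀ y ∈ s, A x y) ∧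
      (∀ y ∈ s, ∀ z ∈ s, y ≠ z → ¬ (underlying A).Adj y z)) :
    (underlying A).chromaticNumber ≤ ((2 * ℓ - 2 : ℕ) : ℕ∞) := by
  classical
  set G : SimpleGraph V := underlying A with hGdef
  set k : ℕ := ℓ - 1 with hkdef
  set N : ℕ := 2 * ℓ - 2 with hNdef
  have hNk : N = 2 * k := by omega
  have hk2 : 2 ≤ k := by omega
  have hN0 : 0 < N := by omega
  have hN4 : 4 ≤ N := by omega
  have hAirr : ∀ u, ¬ A u u := fun u h => hasym u u h h
  have hAne : ∀ u v, A u v → u ≠ v := by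
    intro u v h heq
    subst heq
    exact hAirr u h
  have hAdj : ∀ u v, G.Adj u v ↔ (u ≠ v ∧ (A u v ∨ A v u)) := fun _ _ => Iff.rfl
  have hAadj : ∀ u v, A u v → G.Adj u v := fun u v h =>
    (hAdj u v).mpr ⟨hAne u v h, Or.inl h⟩
  -- out-neighbourhoods have at most k elements
  have houtle : ∀ (v : V) (S : Finset V), (S.filter (fun u => A v u)).card ≤ k := by
    intro v S
    by_contra hgt
    push_neg at hgt
    have hge : ℓ ≤ (S.filter (fun u => A v u)).card := by omega
    obtain ⟨s, hssub, hscard⟩ := Finset.exists_subset_card_eq hge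
    refine hS0l ⟨v, s, hscard, ?_, ?_⟩
    · intro y hy
      exact (Finset.mem_filter.mp (hssub hy)).2
    · intro y hy z hz hyz hadj
      have hAy : A v y := (Finset.mem_filter.mp (hssub hy)).2
      have hAz : A v z := (Finset.mem_filter.mp (hssub hz)).2
      rcases hadj.2 with h | h
      · exact hTT3 ⟨v, y, z, hAy, h, hAz⟩
      · exact hTT3 ⟨v, z, y, hAz, h, hAy⟩
  -- degree splits as out-degree plus in-degree
  have hdegsplit : ∀ (S : Finset V) (v : V), (S.filter (G.Adj v)).card =
      (S.filter (fun u => A v u)).card + (S.filter (fun u => A u v)).card := by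
    intro S v
    rw [← Finset.card_union_of_disjoint]
    · congr 1
      ext u
      simp only [Finset.mem_union, Finset.mem_filter]
      constructor
      · rintro ⟨huS, hne, h | h⟩
        · exact Or.inl ⟨huS, h⟩
        · exact Or.inr ⟨huS, h⟩
      · rintro (⟨huS, h⟩ | ⟨huS, h⟩)
        · exact ⟨huS, (hAne v u h), Or.inl h⟩
        · exact ⟨huS, (hAne u v h).symm, Or.inr h⟩
    · rw [Finset.disjoint_left]
      intro u hu1 hu2
      exact hasym v u (Finset.mem_filter.mp hu1).2 (Finset.mem_filter.mp hu2).2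
  -- in-degree sum equals out-degree sum
  have hsumio : ∀ S : Finset V, ∑ v ∈ S, (S.filter (fun u => A u v)).card
      = ∑ v ∈ S, (S.filter (fun u => A v u)).card := by
    intro S
    have h1 : ∀ v : V, (S.filter (fun u => A u v)).card
        = ∑ u ∈ S, if A u v then 1 else 0 := fun v => Finset.card_filter _ _
    have h2 : ∀ v : V, (S.filter (fun u => A v u)).card
        = ∑ u ∈ S, if A v u then 1 else 0 := fun v => Finset.card_filter _ _
    calc ∑ v ∈ S, (S.filter (fun u => A u v)).card
        = ∑ v ∈ S, ∑ u ∈ S, if A u v then 1 else 0 := Finset.sum_congr rfl fun v _ => h1 v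
    _ = ∑ u ∈ S, ∑ v ∈ S, if A u v then 1 else 0 := Finset.sum_comm
    _ = ∑ v ∈ S, (S.filter (fun u => A v u)).card :=
        Finset.sum_congr rfl fun v _ => (h2 v).symm
  -- regularity in the minimum-degree case
  have hreg : ∀ S : Finset V, (∀ v ∈ S, N ≤ (S.filter (G.Adj v)).card) →
      ∀ v ∈ S, (S.filter (G.Adj v)).card = N ∧ (S.filter (fun u => A v u)).card = k := by
    intro S hmin
    have hsum2 : ∑ v ∈ S, (S.filter (G.Adj v)).card
        = 2 * ∑ v ∈ S, (S.filter (fun u => A v u)).card := by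
      calc ∑ v ∈ S, (S.filter (G.Adj v)).card
          = ∑ v ∈ S, ((S.filter (fun u => A v u)).card + (S.filter (fun u => A u v)).card) :=
            Finset.sum_congr rfl fun v _ => hdegsplit S v
      _ = ∑ v ∈ S, (S.filter (fun u => A v u)).card
            + ∑ v ∈ S, (S.filter (fun u => A u v)).card := Finset.sum_add_distrib
      _ = 2 * ∑ v ∈ S, (S.filter (fun u => A v u)).card := by rw [hsumio S]; ring
    have hsumout_le : ∑ v ∈ S, (S.filter (fun u => A v u)).card ≤ k * S.card := by
      calc ∑ v ∈ S, (S.filter (fun u => A v u)).card ≤ ∑ _v ∈ S, k :=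
            Finset.sum_le_sum fun v _ => houtle v S
      _ = k * S.card := by rw [Finset.sum_const, smul_eq_mul, mul_comm]
    have hsumdeg_le : ∑ v ∈ S, (S.filter (G.Adj v)).card ≤ N * S.card := by
      rw [hsum2, hNk]
      calc 2 * ∑ v ∈ S, (S.filter (fun u => A v u)).card ≤ 2 * (k * S.card) := by omega
      _ = 2 * k * S.card := by ring
    have hdeg_eq : ∀ v ∈ S, (S.filter (G.Adj v)).card = N := by
      by_contra hne
      push_neg at hne
      obtain ⟨v₀, hv₀S, hv₀⟩ := hne
      have hlt : N * S.card < ∑ v ∈ S, (S.filter (G.Adj v)).card := by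
        have := Finset.sum_lt_sum (f := fun _ => N) (g := fun v => (S.filter (G.Adj v)).card)
          (fun i hi => hmin i hi) ⟨v₀, hv₀S, lt_of_le_of_ne (hmin v₀ hv₀S) (Ne.symm hv₀)⟩
        calc N * S.card = ∑ _v ∈ S, N := by rw [Finset.sum_const, smul_eq_mul, mul_comm]
        _ < _ := this
      omega
    have hsumdeg : ∑ v ∈ S, (S.filter (G.Adj v)).card = N * S.card := by
      calc ∑ v ∈ S, (S.filter (G.Adj v)).card = ∑ _v ∈ S, N :=
            Finset.sum_congr rfl hdeg_eq
      _ = N * S.card := by rw [Finset.sum_const, smul_eq_mul, mul_comm]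
    have hsumout : ∑ v ∈ S, (S.filter (fun u => A v u)).card = k * S.card := by
      have h1 : 2 * ∑ v ∈ S, (S.filter (fun u => A v u)).card = 2 * (k * S.card) := by
        rw [← hsum2, hsumdeg, hNk]; ring
      omega
    have hout_eq : ∀ v ∈ S, (S.filter (fun u => A v u)).card = k := by
      by_contra hne
      push_neg at hne
      obtain ⟨v₀, hv₀S, hv₀⟩ := hne
      have hlt : ∑ v ∈ S, (S.filter (fun u => A v u)).card < k * S.card := by
        have := Finset.sum_lt_sum (f := fun v => (S.filter (fun u => A v u)).card)
          (g := fun _ => k) (fun i _ => houtle i S)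
          ⟨v₀, hv₀S, lt_of_le_of_ne (houtle v₀ S) hv₀⟩
        calc ∑ v ∈ S, (S.filter (fun u => A v u)).card < ∑ _v ∈ S, k := this
        _ = k * S.card := by rw [Finset.sum_const, smul_eq_mul, mul_comm]
      omega
    exact fun v hv => ⟨hdeg_eq v hv, hout_eq v hv⟩
  -- main induction
  have main : ∀ (n : ℕ) (S : Finset V), S.card ≤ n →
      ∃ c : V → Fin N, ∀ u ∈ S, ∀ w ∈ S, G.Adj u w → c u ≠ c w := by
    intro n
    induction n with
    | zero =>
      intro S hS
      have : S = ∅ := Finset.card_eq_zero.mp (Nat.le_zero.mp hS)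
      exact ⟨fun _ => ⟨0, hN0⟩, by simp [this]⟩
    | succ n IH =>
      intro S hS
      by_cases hempty : S = ∅
      · exact ⟨fun _ => ⟨0, hN0⟩, by simp [hempty]⟩
      by_cases hlow : ∃ v ∈ S, (S.filter (G.Adj v)).card ≤ N - 1
      · -- remove a low-degree vertex
        obtain ⟨v, hvS, hdv⟩ := hlow
        have hcard : (S.erase v).card ≤ n := by
          have h1 : 1 ≤ S.card := Finset.card_pos.mpr ⟨v, hvS⟩
          rw [Finset.card_erase_of_mem hvS]
          omega
        obtain ⟨c, hc⟩ := IH (S.erase v) hcard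
        have himg : (((S.erase v).filter (G.Adj v)).image c).card < N := by
          calc (((S.erase v).filter (G.Adj v)).image c).card
              ≤ ((S.erase v).filter (G.Adj v)).card := Finset.card_image_le
          _ ≤ (S.filter (G.Adj v)).card :=
              Finset.card_le_card (Finset.filter_subset_filter _ (Finset.erase_subset _ _))
          _ ≤ N - 1 := hdv
          _ < N := by omega
        obtain ⟨col, hcol⟩ := exists_free_color _ himg
        refine ⟨Function.update c v col, ?_⟩
        intro u hu w hw hadj
        by_cases huv : u = v <;> by_cases hwv : w = v
        · rw [huv, hwv] at hadj; exact absurd hadj (G.loopless.irrefl v)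
        · rw [huv] at hadj ⊢
          rw [Function.update_self, Function.update_of_ne hwv]
          intro h
          exact hcol (h ▸ Finset.mem_image.mpr ⟨w, Finset.mem_filter.mpr
            ⟨Finset.mem_erase.mpr ⟨hwv, hw⟩, hadj⟩, rfl⟩)
        · rw [hwv] at hadj ⊢
          rw [Function.update_self, Function.update_of_ne huv]
          intro h
          exact hcol (h ▸ Finset.mem_image.mpr ⟨u, Finset.mem_filter.mpr
            ⟨Finset.mem_erase.mpr ⟨huv, hu⟩, hadj.symm⟩, rfl⟩)
        · rw [Function.update_of_ne huv, Function.update_of_ne hwv]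
          exact hc u (Finset.mem_erase.mpr ⟨huv, hu⟩) w (Finset.mem_erase.mpr ⟨hwv, hw⟩) hadj
      -- now S is N-regular with out-degree k
      push_neg at hlow
      have hmin : ∀ v ∈ S, N ≤ (S.filter (G.Adj v)).card := by
        intro v hv
        have := hlow v hv
        omega
      have hregS := hreg S hmin
      by_cases hconn : ∀ u ∈ S, ∀ w ∈ S, reach G ↑S u w
      · by_cases hcut : ∃ p ∈ S, ∃ z ∈ S.erase p, ∃ w ∈ S.erase p,
            ¬ reach G ↑(S.erase p) z w
        · -- a cut vertex: glue colourings of the pieces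
          obtain ⟨p, hpS, z₀, hz₀, w₀, hw₀, hncut⟩ := hcut
          set piece : V → Finset V :=
            fun q => (S.erase p).filter (fun r => reach G ↑(S.erase p) q r) with hpiecedef
          have hpiece_self : ∀ q ∈ S.erase p, q ∈ piece q := by
            intro q hq
            exact Finset.mem_filter.mpr ⟨hq, Relation.ReflTransGen.refl⟩
          have hpiece_eq : ∀ q ∈ S.erase p, ∀ r ∈ piece q, piece r = piece q := by
            intro q hq r hr
            have hqr : reach G ↑(S.erase p) q r := (Finset.mem_filter.mp hr).2
            ext u
            simp only [hpiecedef, Finset.mem_filter, and_congr_right_iff]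
            intro _
            exact ⟨fun h => hqr.trans h, fun h => (reach_symm hqr).trans h⟩
          have hpx : ∀ q ∈ S.erase p, ∃ c : V → Fin N,
              (∀ u ∈ insert p (piece q), ∀ w ∈ insert p (piece q), G.Adj u w → c u ≠ c w) ∧
              c p = ⟨0, hN0⟩ := by
            intro q hq
            have hmiss : ∃ r, r ∈ S ∧ r ∉ insert p (piece q) := by
              by_cases hz : z₀ ∈ piece q
              · refine ⟨w₀, Finset.mem_of_mem_erase hw₀, ?_⟩
                intro hw
                rcases Finset.mem_insert.mp hw with h | h
                · exact (Finset.mem_erase.mp hw₀).1 h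
                · exact hncut ((reach_symm (Finset.mem_filter.mp hz).2).trans
                    (Finset.mem_filter.mp h).2)
              · refine ⟨z₀, Finset.mem_of_mem_erase hz₀, ?_⟩
                intro hzin
                rcases Finset.mem_insert.mp hzin with h | h
                · exact (Finset.mem_erase.mp hz₀).1 h
                · exact hz h
            obtain ⟨r, hrS, hrnot⟩ := hmiss
            have hsub : insert p (piece q) ⊆ S := by
              intro u hu
              rcases Finset.mem_insert.mp hu with h | h
              · exact h ▸ hpS
              · exact Finset.mem_of_mem_erase (Finset.filter_subset _ _ h)
            have hcard : (insert p (piece q)).card ≤ n := by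
              have : (insert p (piece q)).card < S.card :=
                Finset.card_lt_card (Finset.ssubset_iff_of_subset hsub |>.mpr ⟨r, hrS, hrnot⟩)
              omega
            obtain ⟨c, hc⟩ := IH _ hcard
            refine ⟨(Equiv.swap (c p) ⟨0, hN0⟩) ∘ c, ?_, by
              simp [Function.comp, Equiv.swap_apply_left]⟩
            intro u hu w hw hadj hEq
            exact hc u hu w hw hadj (Equiv.injective _ hEq)
          have hcolP : ∀ T : Finset V, ∃ c : V → Fin N,
              ((∃ q ∈ S.erase p, piece q = T) →
                ((∀ u ∈ insert p T, ∀ w ∈ insert p T, G.Adj u w → c u ≠ c w) ∧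
                  c p = ⟨0, hN0⟩)) := by
            intro T
            by_cases hT : ∃ q ∈ S.erase p, piece q = T
            · obtain ⟨q, hq, rfl⟩ := hT
              obtain ⟨c, h1, h2⟩ := hpx q hq
              exact ⟨c, fun _ => ⟨h1, h2⟩⟩
            · exact ⟨fun _ => ⟨0, hN0⟩, fun h => absurd h hT⟩
          choose F hF using hcolP
          refine ⟨fun v => if v = p then ⟨0, hN0⟩ else F (piece v) v, ?_⟩
          intro u hu w hw hadj
          by_cases hup : u = p <;> by_cases hwp : w = p
          · rw [hup, hwp] at hadj; exact absurd hadj (G.loopless.irrefl p)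
          · rw [hup] at hadj ⊢
            simp only [if_pos rfl, if_neg hwp]
            have hwmem : w ∈ S.erase p := Finset.mem_erase.mpr ⟨hwp, hw⟩
            obtain ⟨hprop, hzero⟩ := hF (piece w) ⟨w, hwmem, rfl⟩
            have := hprop p (Finset.mem_insert_self _ _) w
              (Finset.mem_insert_of_mem (hpiece_self w hwmem)) hadj
            rw [hzero] at this
            exact this
          · rw [hwp] at hadj ⊢
            simp only [if_pos rfl, if_neg hup]
            have humem : u ∈ S.erase p := Finset.mem_erase.mpr ⟨hup, hu⟩
            obtain ⟨hprop, hzero⟩ := hF (piece u) ⟨u, humem, rfl⟩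
            have := hprop u (Finset.mem_insert_of_mem (hpiece_self u humem)) p
              (Finset.mem_insert_self _ _) hadj
            rw [hzero] at this
            exact this
          · simp only [if_neg hup, if_neg hwp]
            have humem : u ∈ S.erase p := Finset.mem_erase.mpr ⟨hup, hu⟩
            have hwmem : w ∈ S.erase p := Finset.mem_erase.mpr ⟨hwp, hw⟩
            have hwpiece : w ∈ piece u := Finset.mem_filter.mpr
              ⟨hwmem, reach_single humem hwmem hadj⟩
            have hpieceeq : piece w = piece u := hpiece_eq u humem w hwpiece
            rw [hpieceeq]
            obtain ⟨hprop, _⟩ := hF (piece u) ⟨u, humem, rfl⟩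
            exact hprop u (Finset.mem_insert_of_mem (hpiece_self u humem)) w
              (Finset.mem_insert_of_mem hwpiece) hadj
        · -- no cut vertex: use the Lovász triple
          push_neg at hcut
          obtain ⟨v₀, hv₀S⟩ := Finset.nonempty_iff_ne_empty.mpr hempty
          have houtcard : 1 < (S.filter (fun u => A v₀ u)).card := by
            rw [(hregS v₀ hv₀S).2]
            omega
          obtain ⟨a₀, ha₀, b₀, hb₀, hab₀⟩ := Finset.one_lt_card.mp houtcard
          have hAa₀ : A v₀ a₀ := (Finset.mem_filter.mp ha₀).2
          have hAb₀ : A v₀ b₀ := (Finset.mem_filter.mp hb₀).2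
          have hpair : ∃ x a b : V, x ∈ S ∧ a ∈ S ∧ b ∈ S ∧ a ≠ b ∧
              G.Adj x a ∧ G.Adj x b ∧ ¬ G.Adj a b := by
            refine ⟨v₀, a₀, b₀, hv₀S, (Finset.mem_filter.mp ha₀).1,
              (Finset.mem_filter.mp hb₀).1, hab₀, hAadj _ _ hAa₀, hAadj _ _ hAb₀, ?_⟩
            intro hadj
            rcases hadj.2 with h | h
            · exact hTT3 ⟨v₀, a₀, b₀, hAa₀, h, hAb₀⟩
            · exact hTT3 ⟨v₀, b₀, a₀, hAb₀, h, hAa₀⟩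
          have hdeg3 : ∀ v ∈ S, 3 ≤ (S.filter (G.Adj v)).card := by
            intro v hv
            rw [(hregS v hv).1]
            omega
          obtain ⟨x, a, b, hxS, haS, hbS, hab, hxa, hxb, hadja, hadjb, hnadj, hB⟩ :=
            exists_triple S hdeg3 hpair hcut
          exact lovasz_color N hN0 S x a b hxS haS hbS hab hxa hxb hadja hadjb hnadj
            (fun v hv => le_of_eq (hregS v hv).1) hB
      · -- disconnected: colour the components separately
        push_neg at hconn
        obtain ⟨u₁, hu₁, w₁, hw₁, hnr⟩ := hconn
        set C : Finset V := S.filter (fun r => reach G ↑S u₁ r) with hCdef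
        have hu₁C : u₁ ∈ C := Finset.mem_filter.mpr ⟨hu₁, Relation.ReflTransGen.refl⟩
        have hw₁C : w₁ ∉ C := fun h => hnr (Finset.mem_filter.mp h).2
        have hCcard : C.card ≤ n := by
          have : C.card < S.card := Finset.card_lt_card
            ((Finset.ssubset_iff_of_subset (Finset.filter_subset _ _)).mpr ⟨w₁, hw₁, hw₁C⟩)
          omega
        have hDcard : (S \ C).card ≤ n := by
          have : (S \ C).card < S.card := Finset.card_lt_card
            ((Finset.ssubset_iff_of_subset (Finset.sdiff_subset)).mpr
              ⟨u₁, hu₁, fun h => (Finset.mem_sdiff.mp h).2 hu₁C⟩)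
          omega
        obtain ⟨c₁, hc₁⟩ := IH C hCcard
        obtain ⟨c₂, hc₂⟩ := IH (S \ C) hDcard
        refine ⟨fun v => if v ∈ C then c₁ v else c₂ v, ?_⟩
        intro u hu w hw hadj
        by_cases huC : u ∈ C <;> by_cases hwC : w ∈ C
        · simp only [if_pos huC, if_pos hwC]
          exact hc₁ u huC w hwC hadj
        · exact absurd (Finset.mem_filter.mpr ⟨hw,
            (Finset.mem_filter.mp huC).2.trans (reach_single hu hw hadj)⟩) hwC
        · exact absurd (Finset.mem_filter.mpr ⟨hu,
            (Finset.mem_filter.mp hwC).2.trans (reach_single hw hu hadj.symm)⟩) huC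
        · simp only [if_neg huC, if_neg hwC]
          exact hc₂ u (Finset.mem_sdiff.mpr ⟨hu, huC⟩) w (Finset.mem_sdiff.mpr ⟨hw, hwC⟩) hadj
  obtain ⟨c, hc⟩ := main (Finset.univ.card) Finset.univ le_rfl
  have hcol : G.Colorable N :=
    ⟨SimpleGraph.Coloring.mk c fun {u w} hadj =>
      hc u (Finset.mem_univ u) w (Finset.mem_univ w) hadj⟩
  exact hcol.chromaticNumber_le
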